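/- Let λ ∈ (0,1) and ν > 0 be real. For N > 0 define D(N) = √( ((1+λ)·N + (1−λ)·ν + 1)² − 4λ·N·(N+1) ) and I_rc(N) = h(N) − h( (D(N) + (1−λ)(N−ν) − 1)/2 ) − h( (D(N) − (1−λ)(N−ν) − 1)/2 ). Then lim_{N→∞} I_rc(N) = −h(ν) − log₂(1−λ). (I_rc(N) is the reverse coherent information of the state obtained by sending half of a two-mode squeezed vacuum with local mean photon number N through the thermal attenuator of transmissivity λ and thermal noise ν.) -/

import Mathlib

/-- The bosonic entropy `h(x) = (x+1)·log₂(x+1) − x·log₂ x` (with `h(0) = 0`,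
which holds automatically since `Real.logb 2 0 = 0`). -/
noncomputable def bosonicEntropy (x : ℝ) : ℝ :=
  (x + 1) * Real.logb 2 (x + 1) - x * Real.logb 2 x

open Filter Real Topology

/-- continuity of the bosonic entropy at positive points -/
lemma bosonicEntropy_continuousAt {a : ℝ} (ha : 0 < a) :
    ContinuousAt bosonicEntropy a := by
  unfold bosonicEntropy
  have h1 : ContinuousAt (fun x : ℝ => Real.logb 2 (x + 1)) a :=
    (Real.continuousAt_logb (by positivity)).comp (by fun_prop)
  have h2 : ContinuousAt (fun x : ℝ => Real.logb 2 x) a :=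
    Real.continuousAt_logb (ne_of_gt ha)
  exact (((continuousAt_id.add continuousAt_const).mul h1).sub
    (continuousAt_id.mul h2))

/-- `h t − log₂(t+1) → log₂ e = 1/log 2` as `t → ∞`. -/
lemma bosonicEntropy_sub_logb_tendsto :
    Tendsto (fun t : ℝ => bosonicEntropy t - Real.logb 2 (t + 1)) atTop
      (nhds (1 / Real.log 2)) := by
  have key : Tendsto (fun t : ℝ => t * Real.log (1 + 1 / t) / Real.log 2) atTop
      (nhds (1 / Real.log 2)) :=
    (Real.tendsto_mul_log_one_add_div_atTop 1).div_const _
  refine key.congr' ?_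
  filter_upwards [eventually_gt_atTop (0 : ℝ)] with t ht
  have ht1 : (0 : ℝ) < t + 1 := by linarith
  have : (1 : ℝ) + 1 / t = (t + 1) / t := by field_simp
  rw [this, Real.log_div (by positivity) (ne_of_gt ht)]
  unfold bosonicEntropy
  unfold Real.logb
  field_simp
  ring

/-- For a thermal attenuator of transmissivity `λ ∈ (0,1)` and thermal noise `ν > 0`, the
reverse coherent information `I_rc(N)` of the output of half a two-mode squeezed vacuum with
local mean photon number `N` tends to `−h(ν) − log₂(1−λ)` as `N → ∞`. -/
theorem stmt7 (lam nu : ℝ) (hlam : lam ∈ Set.Ioo (0 : ℝ) 1) (hnu : 0 < nu) :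
    Filter.Tendsto (fun N : ℝ =>
        bosonicEntropy N
          - bosonicEntropy
            ((Real.sqrt (((1 + lam) * N + (1 - lam) * nu + 1) ^ 2 - 4 * lam * N * (N + 1))
                + (1 - lam) * (N - nu) - 1) / 2)
          - bosonicEntropy
            ((Real.sqrt (((1 + lam) * N + (1 - lam) * nu + 1) ^ 2 - 4 * lam * N * (N + 1))
                - (1 - lam) * (N - nu) - 1) / 2))
      Filter.atTop
      (nhds (-(bosonicEntropy nu) - Real.logb 2 (1 - lam))) := by
  obtain ⟨hl0, hl1⟩ := hlam
  have hl1' : (0 : ℝ) < 1 - lam := by linarith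
  set c : ℝ := 4 * lam * nu * (nu + 1) with hc
  have hcpos : 0 < c := by positivity
  set B : ℝ → ℝ := fun N => (1 - lam) * N + (1 + lam) * nu + 1 with hBdef
  have harg : ∀ N : ℝ, ((1 + lam) * N + (1 - lam) * nu + 1) ^ 2 - 4 * lam * N * (N + 1)
      = (B N) ^ 2 - c := by
    intro N; simp only [hBdef, hc]; ring
  set d : ℝ → ℝ := fun N => Real.sqrt ((B N) ^ 2 - c) - B N with hddef
  have hBtop : Tendsto B atTop atTop := by
    apply Filter.tendsto_atTop_add_const_right
    apply Filter.tendsto_atTop_add_const_right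
    exact (tendsto_id.const_mul_atTop hl1')
  -- d → 0 by squeeze
  have hd0 : Tendsto d atTop (nhds 0) := by
    have hlow : Tendsto (fun N => -c / B N) atTop (nhds 0) := by
      simpa using (tendsto_const_nhds (x := -c)).div_atTop hBtop
    refine tendsto_of_tendsto_of_tendsto_of_le_of_le' hlow tendsto_const_nhds ?_ ?_
    · filter_upwards [hBtop.eventually_ge_atTop (Real.sqrt c),
        hBtop.eventually_gt_atTop 0] with N hB hBpos
      have hBc : c ≤ (B N) ^ 2 := by
        nlinarith [Real.sq_sqrt (le_of_lt hcpos), Real.sqrt_nonneg c]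
      have h1 : (B N - c / B N) ^ 2 ≤ (B N) ^ 2 - c := by
        have hc2 : (c / B N) ^ 2 ≤ c := by
          rw [div_pow, div_le_iff₀ (by positivity)]
          nlinarith
        have he : (B N - c / B N) ^ 2 = (B N) ^ 2 - 2 * c + (c / B N) ^ 2 := by
          field_simp; ring
        linarith
      have h2 : B N - c / B N ≤ Real.sqrt ((B N) ^ 2 - c) := by
        calc B N - c / B N ≤ |B N - c / B N| := le_abs_self _
          _ = Real.sqrt ((B N - c / B N) ^ 2) := (Real.sqrt_sq_eq_abs _).symm
          _ ≤ _ := Real.sqrt_le_sqrt h1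
      simp only [hddef]
      have hne : -c / B N = -(c / B N) := by ring
      rw [hne]
      linarith
    · filter_upwards [hBtop.eventually_gt_atTop 0] with N hBpos
      simp only [hddef, sub_nonpos]
      calc Real.sqrt ((B N) ^ 2 - c) ≤ Real.sqrt ((B N) ^ 2) :=
            Real.sqrt_le_sqrt (by linarith)
        _ = B N := by rw [Real.sqrt_sq hBpos.le]
  set x : ℝ → ℝ := fun N => (1 - lam) * N + lam * nu + d N / 2 with hxdef
  set y : ℝ → ℝ := fun N => nu + d N / 2 with hydef
  have hy : Tendsto y atTop (nhds nu) := by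
    have h := tendsto_const_nhds (x := nu) (f := atTop (α := ℝ)) |>.add (hd0.div_const 2)
    simpa using h
  have hxtop : Tendsto x atTop atTop := by
    apply tendsto_atTop_mono' atTop
      (show ∀ᶠ N in atTop, (1 - lam) * N + lam * nu + (-1) ≤ x N from ?_)
    · apply Filter.tendsto_atTop_add_const_right
      apply Filter.tendsto_atTop_add_const_right
      exact tendsto_id.const_mul_atTop hl1'
    · filter_upwards [hd0.eventually (eventually_ge_nhds (show (-2:ℝ) < 0 by norm_num))]
        with N hdN
      simp only [hxdef]
      clear_value c B d x y
      linarith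
  -- ratio (N+1)/(x N + 1) → 1/(1-lam)
  have hratio : Tendsto (fun N => (N + 1) / (x N + 1)) atTop (nhds (1 / (1 - lam))) := by
    have hnum : Tendsto (fun N : ℝ => (N + 1) / N) atTop (nhds 1) := by
      have h := tendsto_const_nhds (x := (1:ℝ)) (f := atTop (α := ℝ)) |>.add
        tendsto_inv_atTop_zero
      refine (by simpa using h : Tendsto (fun N : ℝ => 1 + N⁻¹) atTop (nhds 1)).congr' ?_
      filter_upwards [eventually_gt_atTop (0 : ℝ)] with N hN
      field_simp
    have hden : Tendsto (fun N : ℝ => (x N + 1) / N) atTop (nhds (1 - lam)) := by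
      have h : Tendsto (fun N : ℝ => (1 - lam) + (lam * nu + d N / 2 + 1) * N⁻¹) atTop
          (nhds ((1 - lam) + (lam * nu + 0 / 2 + 1) * 0)) := by
        exact tendsto_const_nhds.add
          (((tendsto_const_nhds.add (hd0.div_const 2)).add tendsto_const_nhds).mul
            tendsto_inv_atTop_zero)
      refine (by simpa using h : Tendsto _ atTop (nhds (1 - lam))).congr' ?_
      filter_upwards [eventually_gt_atTop (0 : ℝ)] with N hN
      simp only [hxdef]
      field_simp
      ring
    have h := hnum.div hden (ne_of_gt hl1')
    refine h.congr' ?_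
    filter_upwards [eventually_gt_atTop (0 : ℝ), hxtop.eventually_gt_atTop 0] with N hN hxN
    simp only [Pi.div_apply]
    rw [div_div_div_eq, mul_comm N (x N + 1), mul_div_mul_right _ _ (ne_of_gt hN)]
  -- log difference
  have hlogdiff : Tendsto (fun N => Real.logb 2 (N + 1) - Real.logb 2 (x N + 1)) atTop
      (nhds (-Real.logb 2 (1 - lam))) := by
    have hcont : ContinuousAt (Real.logb 2) (1 / (1 - lam)) :=
      Real.continuousAt_logb (by positivity)
    have h := hcont.tendsto.comp hratio
    have hval : Real.logb 2 (1 / (1 - lam)) = -Real.logb 2 (1 - lam) := by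
      rw [one_div, Real.logb_inv]
    rw [hval] at h
    refine h.congr' ?_
    filter_upwards [eventually_gt_atTop (0 : ℝ), hxtop.eventually_gt_atTop 0] with N hN hxN
    simp only [Function.comp]
    rw [Real.logb_div (by linarith) (by linarith)]
  -- the g-terms
  have hg := bosonicEntropy_sub_logb_tendsto
  have hgx : Tendsto (fun N => bosonicEntropy (x N) - Real.logb 2 (x N + 1)) atTop
      (nhds (1 / Real.log 2)) := hg.comp hxtop
  have hhy : Tendsto (fun N => bosonicEntropy (y N)) atTop (nhds (bosonicEntropy nu)) :=
    (bosonicEntropy_continuousAt hnu).tendsto.comp hy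
  -- assemble
  have htot : Tendsto (fun N =>
      ((bosonicEntropy N - Real.logb 2 (N + 1))
        - (bosonicEntropy (x N) - Real.logb 2 (x N + 1)))
      + (Real.logb 2 (N + 1) - Real.logb 2 (x N + 1))
      - bosonicEntropy (y N)) atTop
      (nhds ((1 / Real.log 2 - 1 / Real.log 2) + (-Real.logb 2 (1 - lam))
        - bosonicEntropy nu)) :=
    ((hg.sub hgx).add hlogdiff).sub hhy
  have hvaleq : (1 / Real.log 2 - 1 / Real.log 2) + (-Real.logb 2 (1 - lam))
      - bosonicEntropy nu = -(bosonicEntropy nu) - Real.logb 2 (1 - lam) := by ring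
  rw [hvaleq] at htot
  refine htot.congr fun N => ?_
  have ex : (Real.sqrt (((1 + lam) * N + (1 - lam) * nu + 1) ^ 2 - 4 * lam * N * (N + 1))
      + (1 - lam) * (N - nu) - 1) / 2 = x N := by
    rw [harg N]
    simp only [hxdef, hddef, hBdef]
    ring
  have ey : (Real.sqrt (((1 + lam) * N + (1 - lam) * nu + 1) ^ 2 - 4 * lam * N * (N + 1))
      - (1 - lam) * (N - nu) - 1) / 2 = y N := by
    rw [harg N]
    simp only [hydef, hddef, hBdef]
    ring
  rw [ex, ey]
  ring
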